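/- Let A be an associative unital ℂ-algebra, ℓ an integer with ℓ > 2, and ε ∈ ℂ a primitive ℓ-th root of unity. Suppose a₊, a₋, w, w⁻¹ ∈ A satisfy the q-oscillator relations with q = ε. Then each of the elements a₊^ℓ, a₋^ℓ, w^ℓ, w⁻ℓ commutes with each of a₊, a₋, w, w⁻¹; that is, these elements are central in the subalgebra U_ε′(h₄) generated by a₊, a₋, w, w⁻¹. -/

import Mathlib

private lemma auxA {A : Type*} [Ring A] [Algebra ℂ A] (x y : A) (c : ℂ)
    (h : y * x = c • (x * y)) : ∀ n : ℕ, y * x ^ n = c ^ n • (x ^ n * y) := by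
  intro n
  induction n with
  | zero => simp
  | succ n ih =>
    calc y * x ^ (n + 1) = (y * x) * x ^ n := by rw [pow_succ', ← mul_assoc]
      _ = c • (x * (y * x ^ n)) := by rw [h, smul_mul_assoc, mul_assoc]
      _ = c • (x * (c ^ n • (x ^ n * y))) := by rw [ih]
      _ = c ^ (n+1) • (x ^ (n+1) * y) := by
          rw [mul_smul_comm, smul_smul, pow_succ', ← mul_assoc, pow_succ']

private lemma auxB {A : Type*} [Ring A] [Algebra ℂ A] (x y z : A) (c : ℂ) (hc : c ≠ 0)
    (hxy : y * x = c • (x * y) + z)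
    (hzx : z * x = c⁻¹ • (x * z)) :
    ∀ n : ℕ, y * x ^ (n + 1) = c ^ (n + 1) • (x ^ (n + 1) * y)
      + (∑ k ∈ Finset.range (n + 1), c ^ n * (c⁻¹ ^ 2) ^ k) • (x ^ n * z) := by
  intro n
  induction n with
  | zero => simpa using hxy
  | succ n ih =>
    have hz : z * x ^ (n + 1) = (c⁻¹) ^ (n + 1) • (x ^ (n + 1) * z) := auxA x z c⁻¹ hzx (n + 1)
    calc y * x ^ (n + 2) = (y * x) * x ^ (n + 1) := by rw [pow_succ', ← mul_assoc]
      _ = c • (x * (y * x ^ (n + 1))) + z * x ^ (n + 1) := by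
          rw [hxy, add_mul, smul_mul_assoc, mul_assoc]
      _ = c • (x * (c ^ (n + 1) • (x ^ (n + 1) * y)
            + (∑ k ∈ Finset.range (n + 1), c ^ n * (c⁻¹ ^ 2) ^ k) • (x ^ n * z)))
            + (c⁻¹) ^ (n + 1) • (x ^ (n + 1) * z) := by rw [ih, hz]
      _ = c ^ (n + 2) • (x ^ (n + 2) * y)
            + ((c * ∑ k ∈ Finset.range (n + 1), c ^ n * (c⁻¹ ^ 2) ^ k) + (c⁻¹) ^ (n + 1))
              • (x ^ (n + 1) * z) := by
          rw [mul_add, mul_smul_comm, mul_smul_comm, smul_add, smul_smul, smul_smul, add_smul]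
          rw [← mul_assoc, ← pow_succ', ← mul_assoc, ← pow_succ', ← pow_succ']
          rw [add_assoc]
      _ = c ^ (n + 2) • (x ^ (n + 2) * y)
            + (∑ k ∈ Finset.range (n + 2), c ^ (n + 1) * (c⁻¹ ^ 2) ^ k) • (x ^ (n + 1) * z) := by
          congr 2
          conv_rhs => rw [Finset.sum_range_succ]
          rw [Finset.mul_sum]
          congr 1
          · exact Finset.sum_congr rfl fun k _ => by ring
          · field_simp
            have e1 : c * c⁻¹ = 1 := mul_inv_cancel₀ hc
            have e2 : c ^ n * c⁻¹ ^ n = 1 := by rw [← mul_pow, e1, one_pow]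
            linear_combination (-(c⁻¹ * c⁻¹ ^ n * c ^ n * c⁻¹ ^ n)) * e1 + (-(c⁻¹ * c⁻¹ ^ n)) * e2

private lemma auxC {A : Type*} [Ring A] [Algebra ℂ A] (x y z : A) (c : ℂ) (hc : c ≠ 0)
    (ℓ : ℕ) (hl : 0 < ℓ) (hcl : c ^ ℓ = 1) (hr : c⁻¹ ^ 2 ≠ 1)
    (hxy : y * x = c • (x * y) + z)
    (hzx : z * x = c⁻¹ • (x * z)) :
    y * x ^ ℓ = x ^ ℓ * y := by
  obtain ⟨n, rfl⟩ : ∃ n, ℓ = n + 1 := ⟨ℓ - 1, (Nat.succ_pred_eq_of_pos hl).symm⟩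
  rw [auxB x y z c hc hxy hzx n]
  have hsum : (∑ k ∈ Finset.range (n + 1), c ^ n * (c⁻¹ ^ 2) ^ k) = 0 := by
    rw [← Finset.mul_sum, geom_sum_eq hr]
    have h1 : (c⁻¹ ^ 2) ^ (n + 1) = 1 := by
      rw [← pow_mul, mul_comm, pow_mul, inv_pow, hcl]
      norm_num
    rw [h1]
    simp
  rw [hsum, hcl, zero_smul, one_smul, add_zero]


/-- at a primitive `ℓ`-th root of unity `ε` (with `ℓ > 2`), the
elements `a₊^ℓ, a₋^ℓ, w^ℓ, w⁻ℓ` of the `q`-oscillator algebra `U_ε′(h₄)` commute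
with each of `a₊, a₋, w, w⁻¹`. -/
theorem q_oscillator_lth_powers_central
    {A : Type*} [Ring A] [Algebra ℂ A]
    (ℓ : ℕ) (hl : 2 < ℓ) (ε : ℂ) (hε : IsPrimitiveRoot ε ℓ)
    (ap am w winv : A)
    (hw1 : w * winv = 1) (hw2 : winv * w = 1)
    (hwp : w * ap * winv = ε • ap)
    (hwm : w * am * winv = ε⁻¹ • am)
    (hq : am * ap - ε • (ap * am) = winv)
    (hq' : am * ap - ε⁻¹ • (ap * am) = w) :
    ∀ x ∈ ({ap, am, w, winv} : Set A), ∀ y ∈ ({ap, am, w, winv} : Set A),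
      Commute (x ^ ℓ) y := by
  have hε0 : ε ≠ 0 := hε.ne_zero (by omega)
  have hεℓ : ε ^ ℓ = 1 := hε.pow_eq_one
  have hε2 : ε ^ 2 ≠ 1 := by
    intro h
    have := Nat.le_of_dvd (by norm_num) (hε.dvd_of_pow_eq_one 2 h)
    omega
  have hi0 : ε⁻¹ ≠ 0 := inv_ne_zero hε0
  have hiℓ : ε⁻¹ ^ ℓ = 1 := by rw [inv_pow, hεℓ, inv_one]
  have hi2 : ε⁻¹ ^ 2 ≠ 1 := by
    rw [inv_pow, ne_eq, inv_eq_one]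
    exact hε2
  have hii2 : (ε⁻¹)⁻¹ ^ 2 ≠ 1 := by rwa [inv_inv]
  -- basic commutation relations
  have h1 : w * ap = ε • (ap * w) := by
    have h := congrArg (· * w) hwp
    simpa [mul_assoc, hw2, smul_mul_assoc] using h
  have h2 : ap * w = ε⁻¹ • (w * ap) := by
    rw [h1, smul_smul, inv_mul_cancel₀ hε0, one_smul]
  have h4 : ap * winv = ε • (winv * ap) := by
    have h := congrArg (fun t => winv * t * winv) h1
    simp only [← mul_assoc] at h
    rw [hw2, one_mul] at h
    simpa [mul_assoc, hw1, mul_smul_comm, smul_mul_assoc] using h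
  have h3 : winv * ap = ε⁻¹ • (ap * winv) := by
    rw [h4, smul_smul, inv_mul_cancel₀ hε0, one_smul]
  have h5 : w * am = ε⁻¹ • (am * w) := by
    have h := congrArg (· * w) hwm
    simpa [mul_assoc, hw2, smul_mul_assoc] using h
  have h6 : am * w = ε • (w * am) := by
    rw [h5, smul_smul, mul_inv_cancel₀ hε0, one_smul]
  have h8 : am * winv = ε⁻¹ • (winv * am) := by
    have h := congrArg (fun t => winv * t * winv) h5
    simp only [← mul_assoc] at h
    rw [hw2, one_mul] at h
    simpa [mul_assoc, hw1, mul_smul_comm, smul_mul_assoc] using h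
  have h7 : winv * am = ε • (am * winv) := by
    rw [h8, smul_smul, mul_inv_cancel₀ hε0, one_smul]
  -- powers commuting with w, winv
  have capw : Commute (ap ^ ℓ) w := by
    have h := auxA ap w ε h1 ℓ
    rw [hεℓ, one_smul] at h
    exact h.symm
  have capwinv : Commute (ap ^ ℓ) winv := by
    have h := auxA ap winv ε⁻¹ h3 ℓ
    rw [hiℓ, one_smul] at h
    exact h.symm
  have camw : Commute (am ^ ℓ) w := by
    have h := auxA am w ε⁻¹ h5 ℓ
    rw [hiℓ, one_smul] at h
    exact h.symm
  have camwinv : Commute (am ^ ℓ) winv := by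
    have h := auxA am winv ε h7 ℓ
    rw [hεℓ, one_smul] at h
    exact h.symm
  have cwap : Commute (w ^ ℓ) ap := by
    have h := auxA w ap ε⁻¹ h2 ℓ
    rw [hiℓ, one_smul] at h
    exact h.symm
  have cwam : Commute (w ^ ℓ) am := by
    have h := auxA w am ε h6 ℓ
    rw [hεℓ, one_smul] at h
    exact h.symm
  have cwinvap : Commute (winv ^ ℓ) ap := by
    have h := auxA winv ap ε h4 ℓ
    rw [hεℓ, one_smul] at h
    exact h.symm
  have cwinvam : Commute (winv ^ ℓ) am := by
    have h := auxA winv am ε⁻¹ h8 ℓ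
    rw [hiℓ, one_smul] at h
    exact h.symm
  -- ap^ℓ commutes with am
  have capam : Commute (ap ^ ℓ) am := by
    have hxy : am * ap = ε • (ap * am) + winv := by rw [← hq]; abel
    exact (auxC ap am winv ε hε0 ℓ (by omega) hεℓ hi2 hxy h3).symm
  -- am^ℓ commutes with ap
  have camap : Commute (am ^ ℓ) ap := by
    have hq2 : ε • (ap * am) = am * ap - winv := by rw [← hq]; abel
    have hxy : ap * am = ε⁻¹ • (am * ap) + -(ε⁻¹ • winv) := by
      calc ap * am = ε⁻¹ • (ε • (ap * am)) := (inv_smul_smul₀ hε0 _).symm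
        _ = ε⁻¹ • (am * ap - winv) := by rw [hq2]
        _ = ε⁻¹ • (am * ap) + -(ε⁻¹ • winv) := by rw [smul_sub, sub_eq_add_neg]
    have hzx : (-(ε⁻¹ • winv)) * am = (ε⁻¹)⁻¹ • (am * -(ε⁻¹ • winv)) := by
      rw [inv_inv, neg_mul, smul_mul_assoc, h7, mul_neg, mul_smul_comm, smul_neg,
        smul_smul, smul_smul, inv_mul_cancel₀ hε0, mul_inv_cancel₀ hε0]
    exact (auxC am ap (-(ε⁻¹ • winv)) ε⁻¹ hi0 ℓ (by omega) hiℓ hii2 hxy hzx).symm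
  have cwwinv : Commute w winv := hw1.trans hw2.symm
  rintro x hx y hy
  simp only [Set.mem_insert_iff, Set.mem_singleton_iff] at hx hy
  rcases hx with rfl | rfl | rfl | rfl <;> rcases hy with rfl | rfl | rfl | rfl <;>
    first
      | exact (Commute.refl _).pow_left ℓ
      | exact capam | exact capw | exact capwinv
      | exact camap | exact camw | exact camwinv
      | exact cwap | exact cwam | exact (cwwinv.pow_left ℓ)
      | exact cwinvap | exact cwinvam | exact (cwwinv.symm.pow_left ℓ)
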